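/- In the graded ring ko_* = Z[η,α,β]/(2η, η³, ηα, α² − 4β), multiplication by β gives an isomorphism of abelian groups from the degree-n component to the degree-(n+8) component, for every n ≥ 0. -/
import Mathlib


/- In ko_* = ℤ[η,α,β]/(2η, η³, ηα, α² − 4β), multiplication by β is an isomorphism
   of abelian groups (koDeg n) → (koDeg (n+8)) for all n ≥ 0. -/

noncomputable section
open MvPolynomial

def koI : Ideal (MvPolynomial (Fin 3) ℤ) :=
  Ideal.span {2 * X 0, (X 0) ^ 3, X 0 * X 1, (X 1) ^ 2 - 4 * X 2}

abbrev koR := MvPolynomial (Fin 3) ℤ ⧸ koI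

def koBeta : koR := Ideal.Quotient.mk koI (X 2)

def koW : Fin 3 → ℕ := ![1, 4, 8]

def koDeg (n : ℕ) : Submodule ℤ koR :=
  Submodule.map (Ideal.Quotient.mkₐ ℤ koI).toLinearMap
    (MvPolynomial.weightedHomogeneousSubmodule ℤ koW n)

-- generators
lemma g1_mem : (2 * X 0 : MvPolynomial (Fin 3) ℤ) ∈ koI :=
  Ideal.subset_span (by simp)
lemma g2_mem : ((X 0) ^ 3 : MvPolynomial (Fin 3) ℤ) ∈ koI :=
  Ideal.subset_span (by simp)
lemma g3_mem : (X 0 * X 1 : MvPolynomial (Fin 3) ℤ) ∈ koI :=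
  Ideal.subset_span (by simp)
lemma g4_mem : ((X 1) ^ 2 - 4 * X 2 : MvPolynomial (Fin 3) ℤ) ∈ koI :=
  Ideal.subset_span (by simp)

/-- canonical monomial of weighted degree `n`. -/
def canM (n : ℕ) : MvPolynomial (Fin 3) ℤ :=
  if n % 8 = 0 then X 2 ^ (n / 8)
  else if n % 8 = 1 then X 0 * X 2 ^ (n / 8)
  else if n % 8 = 2 then X 0 ^ 2 * X 2 ^ (n / 8)
  else if n % 8 = 4 then X 1 * X 2 ^ (n / 8)
  else 0

lemma canM_succ (n : ℕ) : canM (n + 8) = X 2 * canM n := by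
  have h1 : (n + 8) % 8 = n % 8 := by omega
  have h2 : (n + 8) / 8 = n / 8 + 1 := by omega
  unfold canM
  rw [h1, h2]
  split_ifs <;> ring

lemma weight_koW (m : Fin 3 →₀ ℕ) :
    (Finsupp.weight koW) m = m 0 + 4 * m 1 + 8 * m 2 := by
  rw [Finsupp.weight_apply, Finsupp.sum_fintype _ _ (fun i => by simp)]
  rw [Fin.sum_univ_three]
  simp [koW]
  ring

lemma monomial_factor (m : Fin 3 →₀ ℕ) (v : ℤ) :
    (monomial m v : MvPolynomial (Fin 3) ℤ) =
      C v * X 0 ^ m 0 * X 1 ^ m 1 * X 2 ^ m 2 := by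
  rw [monomial_eq, Finsupp.prod_fintype _ _ (fun i => by simp), Fin.prod_univ_three]
  ring

lemma isWH_mono (m : Fin 3 →₀ ℕ) (v : ℤ) :
    IsWeightedHomogeneous koW (monomial m v : MvPolynomial (Fin 3) ℤ)
      (m 0 + 4 * m 1 + 8 * m 2) :=
  isWeightedHomogeneous_monomial _ _ _ (weight_koW m)

lemma isWH_prod (a b c : ℕ) :
    IsWeightedHomogeneous koW (X 0 ^ a * X 1 ^ b * X 2 ^ c : MvPolynomial (Fin 3) ℤ)
      (a + 4 * b + 8 * c) := by
  have h : (X 0 ^ a * X 1 ^ b * X 2 ^ c : MvPolynomial (Fin 3) ℤ)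
      = monomial (Finsupp.single 0 a + Finsupp.single 1 b + Finsupp.single 2 c) 1 := by
    rw [monomial_factor]
    simp [Finsupp.single_apply]
  rw [h]
  have := isWH_mono (Finsupp.single 0 a + Finsupp.single 1 b + Finsupp.single 2 c) 1
  simpa [Finsupp.single_apply] using this

lemma canM_mem (n : ℕ) : canM n ∈ weightedHomogeneousSubmodule ℤ koW n := by
  rw [mem_weightedHomogeneousSubmodule]
  have hd : n % 8 + 8 * (n / 8) = n := by omega
  unfold canM
  split_ifs with h0 h1 h2 h4
  · have := isWH_prod 0 0 (n / 8)
    simp only [pow_zero, one_mul] at this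
    convert this using 1
    omega
  · have := isWH_prod 1 0 (n / 8)
    simp only [pow_zero, pow_one, mul_one, one_mul] at this
    convert this using 1
    omega
  · have := isWH_prod 2 0 (n / 8)
    simp only [pow_zero, pow_one, mul_one, one_mul] at this
    convert this using 1
    omega
  · have := isWH_prod 0 1 (n / 8)
    simp only [pow_zero, pow_one, mul_one, one_mul] at this
    convert this using 1
    omega
  · exact isWeightedHomogeneous_zero _ _ _

/-- reduction of powers of `X 1`. -/
lemma red (k : ℕ) : ∀ (ε c : ℕ),
    ((X 1 : MvPolynomial (Fin 3) ℤ) ^ (2 * k + ε) * X 2 ^ c)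
      - ((4 : ℤ) ^ k) • (X 1 ^ ε * X 2 ^ (c + k)) ∈ koI := by
  induction k with
  | zero =>
    intro ε c
    simp
  | succ k ih =>
    intro ε c
    have key : ((X 1 : MvPolynomial (Fin 3) ℤ) ^ (2 * (k+1) + ε) * X 2 ^ c)
        - ((4 : ℤ) ^ (k+1)) • (X 1 ^ ε * X 2 ^ (c + (k+1)))
        = ((X 1) ^ 2 - 4 * X 2) * (X 1 ^ (2 * k + ε) * X 2 ^ c)
          + 4 * ((X 1 ^ (2 * k + ε) * X 2 ^ (c + 1))
            - ((4 : ℤ) ^ k) • (X 1 ^ ε * X 2 ^ ((c + 1) + k))) := by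
      simp only [smul_eq_C_mul, map_pow, map_ofNat]
      ring
    rw [key]
    exact Ideal.add_mem _ (Ideal.mul_mem_right _ _ g4_mem)
      (Ideal.mul_mem_left _ _ (ih ε (c + 1)))

lemma claimA (m : Fin 3 →₀ ℕ) (v : ℤ) :
    ∃ k : ℤ, (monomial m v : MvPolynomial (Fin 3) ℤ)
      - k • canM (m 0 + 4 * m 1 + 8 * m 2) ∈ koI := by
  rw [monomial_factor]
  by_cases h3 : 3 ≤ m 0
  · refine ⟨0, ?_⟩
    simp only [zero_smul, sub_zero]
    obtain ⟨d, hd⟩ : ∃ d, m 0 = 3 + d := ⟨m 0 - 3, by omega⟩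
    have : (C v * X 0 ^ m 0 * X 1 ^ m 1 * X 2 ^ m 2 : MvPolynomial (Fin 3) ℤ)
        = (X 0) ^ 3 * (C v * X 0 ^ d * X 1 ^ m 1 * X 2 ^ m 2) := by
      rw [hd, pow_add]; ring
    rw [this]
    exact Ideal.mul_mem_right _ _ g2_mem
  by_cases hab : 1 ≤ m 0 ∧ 1 ≤ m 1
  · refine ⟨0, ?_⟩
    simp only [zero_smul, sub_zero]
    obtain ⟨d, hd⟩ : ∃ d, m 0 = 1 + d := ⟨m 0 - 1, by omega⟩
    obtain ⟨e, he⟩ : ∃ e, m 1 = 1 + e := ⟨m 1 - 1, by omega⟩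
    have : (C v * X 0 ^ m 0 * X 1 ^ m 1 * X 2 ^ m 2 : MvPolynomial (Fin 3) ℤ)
        = (X 0 * X 1) * (C v * X 0 ^ d * X 1 ^ e * X 2 ^ m 2) := by
      rw [hd, he, pow_add, pow_add]; ring
    rw [this]
    exact Ideal.mul_mem_right _ _ g3_mem
  by_cases h0 : m 0 = 0
  · -- reduce the X 1 powers
    refine ⟨v * 4 ^ (m 1 / 2), ?_⟩
    have hb : m 1 = 2 * (m 1 / 2) + m 1 % 2 := by omega
    have hred := red (m 1 / 2) (m 1 % 2) (m 2)
    have hmem := Ideal.mul_mem_left _ (C v) hred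
    have hcan : canM (m 0 + 4 * m 1 + 8 * m 2)
        = X 1 ^ (m 1 % 2) * X 2 ^ (m 2 + m 1 / 2) := by
      rcases Nat.mod_two_eq_zero_or_one (m 1) with h | h
      · have e0 : (m 0 + 4 * m 1 + 8 * m 2) % 8 = 0 := by omega
        have e1 : (m 0 + 4 * m 1 + 8 * m 2) / 8 = m 2 + m 1 / 2 := by omega
        unfold canM
        rw [e0, e1, h]
        norm_num
      · have e0 : (m 0 + 4 * m 1 + 8 * m 2) % 8 = 4 := by omega
        have e1 : (m 0 + 4 * m 1 + 8 * m 2) / 8 = m 2 + m 1 / 2 := by omega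
        unfold canM
        rw [e0, e1, h]
        norm_num
    rw [hcan]
    have hgoal : (C v * X 0 ^ m 0 * X 1 ^ m 1 * X 2 ^ m 2 : MvPolynomial (Fin 3) ℤ)
        - (v * 4 ^ (m 1 / 2)) • (X 1 ^ (m 1 % 2) * X 2 ^ (m 2 + m 1 / 2))
        = C v * ((X 1 ^ (2 * (m 1 / 2) + m 1 % 2) * X 2 ^ m 2)
            - ((4 : ℤ) ^ (m 1 / 2)) • (X 1 ^ (m 1 % 2) * X 2 ^ (m 2 + m 1 / 2))) := by
      rw [h0, ← hb]
      simp only [smul_eq_C_mul, map_mul, map_pow, map_ofNat, pow_zero]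
      ring
    rw [hgoal]
    exact hmem
  · -- m 0 = 1 or 2, m 1 = 0
    have ha : m 0 = 1 ∨ m 0 = 2 := by omega
    have hb : m 1 = 0 := by omega
    refine ⟨v, ?_⟩
    have hcan : canM (m 0 + 4 * m 1 + 8 * m 2) = X 0 ^ m 0 * X 2 ^ m 2 := by
      rcases ha with h | h
      · have e0 : (m 0 + 4 * m 1 + 8 * m 2) % 8 = 1 := by omega
        have e1 : (m 0 + 4 * m 1 + 8 * m 2) / 8 = m 2 := by omega
        unfold canM
        rw [e0, e1, h]
        norm_num
      · have e0 : (m 0 + 4 * m 1 + 8 * m 2) % 8 = 2 := by omega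
        have e1 : (m 0 + 4 * m 1 + 8 * m 2) / 8 = m 2 := by omega
        unfold canM
        rw [e0, e1, h]
        norm_num
    rw [hcan, hb]
    have : (C v * X 0 ^ m 0 * X 1 ^ 0 * X 2 ^ m 2 : MvPolynomial (Fin 3) ℤ)
        - v • (X 0 ^ m 0 * X 2 ^ m 2) = 0 := by
      simp only [smul_eq_C_mul, pow_zero]
      ring
    rw [this]
    exact Ideal.zero_mem _

lemma claimB {n : ℕ} {p : MvPolynomial (Fin 3) ℤ}
    (hp : p ∈ weightedHomogeneousSubmodule ℤ koW n) :
    ∃ k : ℤ, p - k • canM n ∈ koI := by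
  rw [mem_weightedHomogeneousSubmodule] at hp
  have hw : ∀ m ∈ p.support, m 0 + 4 * m 1 + 8 * m 2 = n := by
    intro m hm
    have := hp (mem_support_iff.mp hm)
    rw [weight_koW] at this
    exact this
  choose k hk using fun m : Fin 3 →₀ ℕ => claimA m (coeff m p)
  refine ⟨∑ m ∈ p.support, k m, ?_⟩
  have heq : p - (∑ m ∈ p.support, k m) • canM n
      = ∑ m ∈ p.support, ((monomial m (coeff m p) : MvPolynomial (Fin 3) ℤ)
          - k m • canM n) := by
    rw [Finset.sum_sub_distrib, ← as_sum p, Finset.sum_smul]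
  rw [heq]
  refine Ideal.sum_mem _ (fun m hm => ?_)
  have := hk m
  rwa [hw m hm] at this

-- the two detecting ring homs
def f1 : MvPolynomial (Fin 3) ℤ →+* Polynomial ℤ :=
  eval₂Hom Polynomial.C ![0, 2 * Polynomial.X, Polynomial.X ^ 2]

lemma f1_X0 : f1 (X 0) = 0 := by simp [f1]
lemma f1_X1 : f1 (X 1) = 2 * Polynomial.X := by simp [f1]
lemma f1_X2 : f1 (X 2) = Polynomial.X ^ 2 := by simp [f1]
lemma f1_C (r : ℤ) : f1 (C r) = Polynomial.C r := by simp [f1]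

lemma f1_koI {q : MvPolynomial (Fin 3) ℤ} (hq : q ∈ koI) : f1 q = 0 := by
  have hle : koI ≤ RingHom.ker f1 := by
    rw [koI, Ideal.span_le]
    intro g hg
    simp only [Set.mem_insert_iff, Set.mem_singleton_iff] at hg
    rcases hg with rfl | rfl | rfl | rfl
    · rw [SetLike.mem_coe, RingHom.mem_ker, map_mul, f1_X0, mul_zero]
    · rw [SetLike.mem_coe, RingHom.mem_ker, map_pow, f1_X0]
      norm_num
    · rw [SetLike.mem_coe, RingHom.mem_ker, map_mul, f1_X0, zero_mul]
    · rw [SetLike.mem_coe, RingHom.mem_ker, map_sub, map_pow, map_mul, f1_X1, f1_X2]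
      have : f1 4 = 4 := by
        rw [show (4 : MvPolynomial (Fin 3) ℤ) = C (4 : ℤ) by norm_num, f1_C]
        norm_num
      rw [this]
      ring
  exact hle hq

abbrev Q2R := MvPolynomial (Fin 2) (ZMod 2)
def I2 : Ideal Q2R := Ideal.span {(X 0 : Q2R) ^ 3}

def f2 : MvPolynomial (Fin 3) ℤ →+* (Q2R ⧸ I2) :=
  eval₂Hom ((Ideal.Quotient.mk I2).comp ((C : ZMod 2 →+* Q2R).comp (Int.castRingHom (ZMod 2))))
    ![Ideal.Quotient.mk I2 (X 0), 0, Ideal.Quotient.mk I2 (X 1)]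

lemma f2_X0 : f2 (X 0) = Ideal.Quotient.mk I2 (X 0) := by simp [f2]
lemma f2_X1 : f2 (X 1) = 0 := by simp [f2]
lemma f2_X2 : f2 (X 2) = Ideal.Quotient.mk I2 (X 1) := by simp [f2]
lemma f2_C (r : ℤ) : f2 (C r) = Ideal.Quotient.mk I2 (C ((r : ZMod 2))) := by
  simp [f2]

lemma f2_koI {q : MvPolynomial (Fin 3) ℤ} (hq : q ∈ koI) : f2 q = 0 := by
  have hle : koI ≤ RingHom.ker f2 := by
    rw [koI, Ideal.span_le]
    intro g hg
    simp only [Set.mem_insert_iff, Set.mem_singleton_iff] at hg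
    have hy3 : (Ideal.Quotient.mk I2) ((X 0 : Q2R) ^ 3) = 0 :=
      Ideal.Quotient.eq_zero_iff_mem.mpr (Ideal.subset_span rfl)
    rcases hg with rfl | rfl | rfl | rfl
    · rw [SetLike.mem_coe, RingHom.mem_ker,
        show (2 : MvPolynomial (Fin 3) ℤ) * X 0 = C (2 : ℤ) * X 0 by norm_num,
        map_mul, f2_C]
      have : ((2 : ℤ) : ZMod 2) = 0 := by decide
      rw [this]
      simp
    · rw [SetLike.mem_coe, RingHom.mem_ker, map_pow, f2_X0, ← map_pow, hy3]
    · rw [SetLike.mem_coe, RingHom.mem_ker, map_mul, f2_X1, mul_zero]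
    · rw [SetLike.mem_coe, RingHom.mem_ker, map_sub, map_pow, f2_X1,
        show (4 : MvPolynomial (Fin 3) ℤ) * X 2 = C (4 : ℤ) * X 2 by norm_num,
        map_mul, f2_C]
      have : ((4 : ℤ) : ZMod 2) = 0 := by decide
      rw [this]
      simp
  exact hle hq

lemma key2 (a : ZMod 2) (e kk : ℕ) (he : e < 3)
    (h : (C a * (X 0 ^ e * X 1 ^ kk) : Q2R) ∈ I2) : a = 0 := by
  rw [I2, Ideal.mem_span_singleton] at h
  obtain ⟨h', hh⟩ := h
  have hc := congrArg (coeff (Finsupp.single 0 e + Finsupp.single 1 kk)) hh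
  have hL : coeff (Finsupp.single 0 e + Finsupp.single 1 kk)
      (C a * (X 0 ^ e * X 1 ^ kk) : Q2R) = a := by
    have : (C a * (X 0 ^ e * X 1 ^ kk) : Q2R)
        = monomial (Finsupp.single 0 e + Finsupp.single 1 kk) a := by
      rw [X_pow_eq_monomial, X_pow_eq_monomial, monomial_mul, C_mul_monomial]
      simp
    rw [this, coeff_monomial]
    simp
  have hR : coeff (Finsupp.single 0 e + Finsupp.single 1 kk)
      ((X 0 : Q2R) ^ 3 * h') = 0 := by
    rw [X_pow_eq_monomial, coeff_monomial_mul']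
    rw [if_neg]
    intro hle
    have := hle 0
    simp [Finsupp.single_apply] at this
    omega
  rw [hL, hR] at hc
  exact hc

lemma torsion (n : ℕ) (j : ℤ)
    (h : j • ((Ideal.Quotient.mk koI) (canM (n + 8))) = 0) :
    j • ((Ideal.Quotient.mk koI) (canM n)) = 0 := by
  have hmem : j • canM (n + 8) ∈ koI := by
    rw [← Ideal.Quotient.eq_zero_iff_mem, map_zsmul]
    exact h
  have h1 : (n + 8) % 8 = n % 8 := by omega
  have h2 : (n + 8) / 8 = n / 8 + 1 := by omega
  have h8 : n % 8 = 0 ∨ n % 8 = 1 ∨ n % 8 = 2 ∨ n % 8 = 4 ∨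
      (n % 8 = 3 ∨ n % 8 = 5 ∨ n % 8 = 6 ∨ n % 8 = 7) := by omega
  rcases h8 with hr | hr | hr | hr | hr
  · -- j = 0
    have hcm : canM (n + 8) = X 2 ^ (n / 8 + 1) := by simp [canM, h1, h2, hr]
    have hf := f1_koI hmem
    rw [hcm, smul_eq_C_mul, map_mul, map_pow] at hf
    rw [f1_C, f1_X2, ← pow_mul] at hf
    have hj : j = 0 := by
      have := congrArg (Polynomial.coeff · (2 * (n / 8 + 1))) hf
      simpa [Polynomial.coeff_C_mul, Polynomial.coeff_X_pow] using this
    rw [hj, zero_smul]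
  · -- n % 8 = 1 : j is even
    have hcm : canM (n + 8) = X 0 * X 2 ^ (n / 8 + 1) := by simp [canM, h1, h2, hr]
    have hf := f2_koI hmem
    rw [hcm, smul_eq_C_mul] at hf
    have hval : f2 (C j * (X 0 * X 2 ^ (n / 8 + 1)))
        = Ideal.Quotient.mk I2 (C ((j : ZMod 2)) * (X 0 ^ 1 * X 1 ^ (n / 8 + 1))) := by
      rw [map_mul, map_mul, map_pow, f2_C, f2_X0, f2_X2, ← map_pow, ← map_mul,
        ← map_mul, pow_one]
    rw [hval, Ideal.Quotient.eq_zero_iff_mem] at hf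
    have hj2 : ((j : ZMod 2)) = 0 := key2 _ 1 _ (by norm_num) hf
    have hdvd : (2 : ℤ) ∣ j := by exact_mod_cast (ZMod.intCast_zmod_eq_zero_iff_dvd j 2).mp hj2
    obtain ⟨t, rfl⟩ := hdvd
    have hcn : canM n = X 0 * X 2 ^ (n / 8) := by simp [canM, hr]
    rw [hcn, ← map_zsmul, Ideal.Quotient.eq_zero_iff_mem]
    have : ((2 * t : ℤ)) • ((X 0 : MvPolynomial (Fin 3) ℤ) * X 2 ^ (n / 8))
        = (2 * X 0) * (C t * X 2 ^ (n / 8)) := by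
      simp only [smul_eq_C_mul, map_mul, map_ofNat]
      ring
    rw [this]
    exact Ideal.mul_mem_right _ _ g1_mem
  · -- n % 8 = 2
    have hcm : canM (n + 8) = X 0 ^ 2 * X 2 ^ (n / 8 + 1) := by simp [canM, h1, h2, hr]
    have hf := f2_koI hmem
    rw [hcm, smul_eq_C_mul] at hf
    have hval : f2 (C j * (X 0 ^ 2 * X 2 ^ (n / 8 + 1)))
        = Ideal.Quotient.mk I2 (C ((j : ZMod 2)) * (X 0 ^ 2 * X 1 ^ (n / 8 + 1))) := by
      rw [map_mul, map_mul, map_pow, map_pow, f2_C, f2_X0, f2_X2, ← map_pow,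
        ← map_pow, ← map_mul, ← map_mul]
    rw [hval, Ideal.Quotient.eq_zero_iff_mem] at hf
    have hj2 : ((j : ZMod 2)) = 0 := key2 _ 2 _ (by norm_num) hf
    have hdvd : (2 : ℤ) ∣ j := by exact_mod_cast (ZMod.intCast_zmod_eq_zero_iff_dvd j 2).mp hj2
    obtain ⟨t, rfl⟩ := hdvd
    have hcn : canM n = X 0 ^ 2 * X 2 ^ (n / 8) := by simp [canM, hr]
    rw [hcn, ← map_zsmul, Ideal.Quotient.eq_zero_iff_mem]
    have : ((2 * t : ℤ)) • ((X 0 : MvPolynomial (Fin 3) ℤ) ^ 2 * X 2 ^ (n / 8))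
        = (2 * X 0) * (C t * X 0 * X 2 ^ (n / 8)) := by
      simp only [smul_eq_C_mul, map_mul, map_ofNat]
      ring
    rw [this]
    exact Ideal.mul_mem_right _ _ g1_mem
  · -- n % 8 = 4 : j = 0
    have hcm : canM (n + 8) = X 1 * X 2 ^ (n / 8 + 1) := by simp [canM, h1, h2, hr]
    have hf := f1_koI hmem
    rw [hcm, smul_eq_C_mul] at hf
    have hval : f1 (C j * (X 1 * X 2 ^ (n / 8 + 1)))
        = Polynomial.C (2 * j) * Polynomial.X ^ (2 * (n / 8 + 1) + 1) := by
      rw [map_mul, map_mul, map_pow, f1_C, f1_X1, f1_X2, map_mul]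
      have : Polynomial.C (2 : ℤ) = 2 := by norm_num
      rw [this, ← pow_mul]
      ring
    rw [hval] at hf
    have hj : 2 * j = 0 := by
      have hc := congrArg (fun q => Polynomial.coeff q (2 * (n / 8 + 1) + 1)) hf
      simp only [Polynomial.coeff_C_mul, Polynomial.coeff_X_pow, Polynomial.coeff_zero] at hc
      simpa using hc
    have : j = 0 := by omega
    rw [this, zero_smul]
  · -- trivial cases
    have hcn : canM n = 0 := by
      unfold canM
      rcases hr with h | h | h | h <;> simp [h]
    rw [hcn, map_zero, smul_zero]

lemma koDeg_rep {n : ℕ} {x : koR} (hx : x ∈ koDeg n) :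
    ∃ k : ℤ, x = k • (Ideal.Quotient.mk koI) (canM n) := by
  obtain ⟨p, hp, rfl⟩ := hx
  obtain ⟨k, hk⟩ := claimB hp
  refine ⟨k, ?_⟩
  have : (Ideal.Quotient.mk koI) (p - k • canM n) = 0 :=
    Ideal.Quotient.eq_zero_iff_mem.mpr hk
  rw [map_sub, map_zsmul, sub_eq_zero] at this
  simpa [Ideal.Quotient.mkₐ_eq_mk] using this

/-- Multiplication by β maps the degree-`n` component into the degree-`n+8` component,
is injective there, and hits all of the degree-`n+8` component: i.e. it is an
isomorphism of abelian groups `koDeg n ≃ koDeg (n+8)` for every `n ≥ 0`. -/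
theorem ko_beta_periodicity (n : ℕ) :
    (∀ x ∈ koDeg n, koBeta * x ∈ koDeg (n + 8)) ∧
    (∀ x ∈ koDeg n, ∀ y ∈ koDeg n, koBeta * x = koBeta * y → x = y) ∧
    (∀ z ∈ koDeg (n + 8), ∃ x ∈ koDeg n, koBeta * x = z) := by
  have hcanDeg : ∀ m : ℕ, (Ideal.Quotient.mk koI) (canM m) ∈ koDeg m := by
    intro m
    exact ⟨canM m, canM_mem m, by simp [Ideal.Quotient.mkₐ_eq_mk]⟩
  have hbeta_can : ∀ m : ℕ,
      koBeta * (Ideal.Quotient.mk koI) (canM m) = (Ideal.Quotient.mk koI) (canM (m + 8)) := by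
    intro m
    rw [koBeta, ← map_mul, canM_succ]
  refine ⟨?_, ?_, ?_⟩
  · rintro x ⟨p, hp, rfl⟩
    refine ⟨X 2 * p, ?_, ?_⟩
    · have h2 : IsWeightedHomogeneous koW (X 2 : MvPolynomial (Fin 3) ℤ) 8 := by
        have := isWeightedHomogeneous_X ℤ koW (2 : Fin 3)
        simpa [koW] using this
      have hp' : IsWeightedHomogeneous koW p n := hp
      have hmul := h2.mul hp'
      rw [show 8 + n = n + 8 from by omega] at hmul
      exact hmul
    · simp [koBeta, Ideal.Quotient.mkₐ_eq_mk, map_mul]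
  · intro x hx y hy hxy
    obtain ⟨k, rfl⟩ := koDeg_rep hx
    obtain ⟨l, rfl⟩ := koDeg_rep hy
    have h0 : (k - l) • (koBeta * (Ideal.Quotient.mk koI) (canM n)) = 0 := by
      rw [sub_smul, mul_smul_comm, mul_smul_comm] at *
      rw [hxy]
      ring
    rw [hbeta_can] at h0
    have := torsion n (k - l) h0
    rw [sub_smul, sub_eq_zero] at this
    rw [this]
  · rintro z hz
    obtain ⟨k, rfl⟩ := koDeg_rep hz
    refine ⟨k • (Ideal.Quotient.mk koI) (canM n), Submodule.smul_mem _ _ (hcanDeg n), ?_⟩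
    rw [mul_smul_comm, hbeta_can]

end
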